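/- C^{1,1} regularity on the set of agreement: both u₋ and u₊ are of class C^{1,1} on the set I_{u₊} := {x ∈ M : u₋(x) = u₊(x)}; in particular the common value u := u₋ = u₊ has Lipschitz derivative there. -/

import Mathlib

open Set
open scoped NNReal

open Filter

local notation "⟪" x ", " y "⟫" => (inner ℝ x y : ℝ)

section AuxiliaryLemmas
variable {E : Type*} [NormedAddCommGroup E] [InnerProductSpace ℝ E]

/-- Midpoint convex (in symmetric form) + continuous implies convex. -/
lemma aux_convexOn_of_midpoint {f : E → ℝ} (hc : Continuous f)
    (hm : ∀ x h : E, 2 * f x ≤ f (x + h) + f (x - h)) :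
    ConvexOn ℝ Set.univ f := by
  refine ⟨convex_univ, fun x _ y _ a b ha hb hab => ?_⟩
  set g : ℝ → ℝ := fun t => f (x + t • (y - x)) - (f x + t * (f y - f x)) with hgdef
  have hgc : Continuous g := by
    apply Continuous.sub
    · exact hc.comp (continuous_const.add (continuous_id.smul continuous_const))
    · continuity
  have hg0 : g 0 = 0 := by simp [hgdef]
  have hg1 : g 1 = 0 := by
    have e : x + (1:ℝ) • (y - x) = y := by module
    simp only [hgdef, e, one_mul]; ring
  have hgm : ∀ s t : ℝ, 2 * g ((s + t) / 2) ≤ g s + g t := by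
    intro s t
    have h1 := hm (x + ((s + t) / 2) • (y - x)) (((t - s) / 2) • (y - x))
    have e1 : x + ((s + t) / 2) • (y - x) + ((t - s) / 2) • (y - x) = x + t • (y - x) := by
      rw [add_assoc, ← add_smul]; ring_nf
    have e2 : x + ((s + t) / 2) • (y - x) - ((t - s) / 2) • (y - x) = x + s • (y - x) := by
      rw [add_sub_assoc, ← sub_smul]; ring_nf
    rw [e1, e2] at h1
    simp only [hgdef]
    have e3 : (2:ℝ) * ((s + t) / 2 * (f y - f x)) = s * (f y - f x) + t * (f y - f x) := by ring
    linarith [h1, e3]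
  clear_value g
  have hkey : ∀ t, t ∈ Icc (0:ℝ) 1 → g t ≤ 0 := by
    intro t ht
    set S : Set ℝ := Icc (0:ℝ) 1 ∩ {u | g u ≤ 0} with hSdef
    have hSc : IsClosed S := isClosed_Icc.inter (isClosed_le hgc continuous_const)
    have h0S : (0:ℝ) ∈ S := ⟨⟨le_refl 0, zero_le_one⟩, hg0.le⟩
    have h1S : (1:ℝ) ∈ S := ⟨⟨zero_le_one, le_refl 1⟩, hg1.le⟩
    have hmid : ∀ u ∈ S, ∀ v ∈ S, (u + v) / 2 ∈ S := by
      rintro u ⟨⟨hu0, hu1⟩, hgu⟩ v ⟨⟨hv0, hv1⟩, hgv⟩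
      have h2 := hgm u v
      simp only [mem_setOf_eq] at hgu hgv
      refine ⟨⟨by linarith, by linarith⟩, ?_⟩
      simp only [mem_setOf_eq]
      linarith
    -- bisection
    set F : ℕ → ℝ × ℝ := fun n => Nat.rec ((0:ℝ), (1:ℝ))
      (fun _ p => if t ≤ (p.1 + p.2) / 2 then (p.1, (p.1 + p.2) / 2)
                  else ((p.1 + p.2) / 2, p.2)) n with hF
    have hFn : ∀ n, F (n + 1) = if t ≤ ((F n).1 + (F n).2) / 2
        then ((F n).1, ((F n).1 + (F n).2) / 2)
        else (((F n).1 + (F n).2) / 2, (F n).2) := fun n => rfl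
    have hinv : ∀ n, (F n).1 ∈ S ∧ (F n).2 ∈ S ∧ (F n).1 ≤ t ∧ t ≤ (F n).2 ∧
        (F n).2 - (F n).1 = (1/2 : ℝ) ^ n := by
      intro n
      induction n with
      | zero =>
        refine ⟨h0S, h1S, ht.1, ht.2, ?_⟩
        show (1:ℝ) - 0 = (1/2:ℝ) ^ 0
        norm_num
      | succ n ih =>
        obtain ⟨ha', hb', hat, htb, hlen⟩ := ih
        have hmS := hmid _ ha' _ hb'
        by_cases hcase : t ≤ ((F n).1 + (F n).2) / 2
        · have he : F (n + 1) = ((F n).1, ((F n).1 + (F n).2) / 2) := by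
            rw [hFn, if_pos hcase]
          rw [he]
          exact ⟨ha', hmS, hat, hcase, by rw [pow_succ]; dsimp only; linarith⟩
        · have he : F (n + 1) = (((F n).1 + (F n).2) / 2, (F n).2) := by
            rw [hFn, if_neg hcase]
          rw [he]
          exact ⟨hmS, hb', (not_le.1 hcase).le, htb, by rw [pow_succ]; dsimp only; linarith⟩
    have htend : Tendsto (fun n => (F n).1) atTop (nhds t) := by
      have hlow : ∀ n, t - (1/2:ℝ)^n ≤ (F n).1 := by
        intro n
        obtain ⟨_, _, _, htb, hlen⟩ := hinv n
        linarith
      have hup : ∀ n, (F n).1 ≤ t := fun n => (hinv n).2.2.1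
      have l1 : Tendsto (fun n => t - (1/2:ℝ)^n) atTop (nhds t) := by
        have h2 : Tendsto (fun n : ℕ => (1/2:ℝ)^n) atTop (nhds 0) :=
          tendsto_pow_atTop_nhds_zero_of_lt_one (by norm_num) (by norm_num)
        simpa using tendsto_const_nhds.sub h2
      exact tendsto_of_tendsto_of_tendsto_of_le_of_le l1 tendsto_const_nhds hlow hup
    have htS : t ∈ S := hSc.mem_of_tendsto htend (Eventually.of_forall fun n => (hinv n).1)
    exact htS.2
  have hb1 : b ∈ Icc (0:ℝ) 1 := ⟨hb, by linarith⟩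
  have hgb := hkey b hb1
  have ha' : a = 1 - b := by linarith
  have e3 : x + b • (y - x) = a • x + b • y := by rw [ha']; module
  simp only [hgdef, e3] at hgb
  have : f (a • x + b • y) ≤ f x + b * (f y - f x) := by linarith
  calc f (a • x + b • y) ≤ f x + b * (f y - f x) := this
    _ = a * f x + b * f y := by rw [ha']; ring

lemma aux_exists_subgradient [CompleteSpace E] {f : E → ℝ} (hf : ConvexOn ℝ Set.univ f)
    (hc : Continuous f) (x : E) : ∃ p : E, ∀ y, f x + ⟪p, y - x⟫ ≤ f y := by
  set s : Set (E × ℝ) := {q | f q.1 < q.2} with hs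
  have hso : IsOpen s := isOpen_lt (hc.comp continuous_fst) continuous_snd
  have hsconv : Convex ℝ s := by
    rintro ⟨y, r⟩ hy ⟨z, w⟩ hz a b ha hb hab
    simp only [hs, Set.mem_setOf_eq] at hy hz ⊢
    have h1 := hf.2 (Set.mem_univ y) (Set.mem_univ z) ha hb hab
    simp only [smul_eq_mul, Prod.smul_mk, Prod.mk_add_mk, Prod.fst, Prod.snd] at h1 ⊢
    have h2 : a * f y + b * f z < a * r + b * w := by
      rcases eq_or_lt_of_le ha with ha' | ha'
      · have hb1 : b = 1 := by linarith
        rw [← ha', hb1]; simpa using hz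
      · have := mul_lt_mul_of_pos_left hy ha'
        have := mul_le_mul_of_nonneg_left hz.le hb
        linarith
    linarith
  have hxs : (x, f x) ∉ s := by simp [hs]
  obtain ⟨L, hL⟩ := geometric_hahn_banach_open_point hsconv hso hxs
  set c : ℝ := L (0, 1) with hcdef
  have hdecomp : ∀ (y : E) (t : ℝ), L (y, t) = L (y, 0) + t * c := by
    intro y t
    have he : (y, t) = (y, (0:ℝ)) + t • ((0:E), (1:ℝ)) := by
      simp [Prod.ext_iff]
    rw [he, map_add, map_smul, smul_eq_mul]
  have hc0 : c < 0 := by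
    have h1 := hL (x, f x + 1) (by simp [hs])
    rw [hdecomp x (f x + 1), hdecomp x (f x)] at h1
    linarith
  have hcne : c ≠ 0 := ne_of_lt hc0
  have hkey : ∀ y : E, L (y, 0) + f y * c ≤ L (x, 0) + f x * c := by
    intro y
    by_contra hcon
    push_neg at hcon
    set δ := (L (y, 0) + f y * c) - (L (x, 0) + f x * c) with hδ
    have hδ0 : 0 < δ := by simp only [hδ]; linarith
    have hε0 : 0 < δ / (2 * (-c)) := div_pos hδ0 (by linarith)
    have hmem : (y, f y + δ / (2 * (-c))) ∈ s := by
      rw [hs]; simp only [mem_setOf_eq]; linarith [hε0]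
    have h1 := hL _ hmem
    rw [hdecomp y (f y + δ / (2 * (-c))), hdecomp x (f x)] at h1
    have hc' : (δ / (2 * (-c))) * c = -(δ/2) := by
      field_simp
    have hexp : (f y + δ / (2 * (-c))) * c = f y * c - δ/2 := by
      rw [add_mul, hc']; ring
    rw [hexp] at h1
    simp only [hδ] at h1 hδ0
    linarith
  set φ : E →L[ℝ] ℝ := (-c)⁻¹ • (L.comp (ContinuousLinearMap.inl ℝ E ℝ)) with hφ
  refine ⟨(InnerProductSpace.toDual ℝ E).symm φ, fun y => ?_⟩
  rw [InnerProductSpace.toDual_symm_apply]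
  have hφval : φ (y - x) = (-c)⁻¹ * (L (y, 0) - L (x, 0)) := by
    simp only [hφ, ContinuousLinearMap.smul_apply, ContinuousLinearMap.comp_apply,
      ContinuousLinearMap.inl_apply, smul_eq_mul]
    have : ((y - x : E), (0:ℝ)) = (y, (0:ℝ)) - (x, (0:ℝ)) := by simp [Prod.ext_iff]
    rw [this, map_sub]
  rw [hφval]
  have hkc := hkey y
  have hcpos : 0 < -c := by linarith
  rw [← sub_nonneg]
  have : f y - (f x + (-c)⁻¹ * (L (y, 0) - L (x, 0)))
      = ((-c) * (f y - f x) - (L (y, 0) - L (x, 0))) / (-c) := by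
    field_simp
    ring
  rw [this]
  apply div_nonneg _ hcpos.le
  nlinarith [hkc]

lemma aux_norm_expand (x z : E) : ‖z‖^2 = ‖x‖^2 + 2 * ⟪x, z - x⟫ + ‖z - x‖^2 := by
  conv_lhs => rw [show z = x + (z - x) by abel]
  rw [norm_add_sq_real]

lemma aux_quad_sub [CompleteSpace E] {f : E → ℝ} {C : ℝ} (hc : Continuous f)
    (h : ∀ x h : E, -(C * ‖h‖ ^ 2) ≤ f (x + h) + f (x - h) - 2 * f x) (x : E) :
    ∃ p : E, ∀ z, f x + ⟪p, z - x⟫ - C / 2 * ‖z - x‖ ^ 2 ≤ f z := by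
  set F : E → ℝ := fun y => f y + C / 2 * ‖y‖ ^ 2 with hF
  have hFc : Continuous F := by
    apply hc.add
    continuity
  have hFm : ∀ y h : E, 2 * F y ≤ F (y + h) + F (y - h) := by
    intro y h'
    have h1 := h y h'
    have e1 : ‖y + h'‖^2 = ‖y‖^2 + 2*⟪y, h'⟫ + ‖h'‖^2 := norm_add_sq_real y h'
    have e2 : ‖y - h'‖^2 = ‖y‖^2 - 2*⟪y, h'⟫ + ‖h'‖^2 := norm_sub_sq_real y h'
    have e3 : C/2*‖y + h'‖^2 + C/2*‖y - h'‖^2 = C*‖y‖^2 + C*‖h'‖^2 := by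
      rw [e1, e2]; ring
    simp only [hF]
    linarith [h1, e3]
  obtain ⟨p', hp'⟩ := aux_exists_subgradient (aux_convexOn_of_midpoint hFc hFm) hFc x
  refine ⟨p' - C • x, fun z => ?_⟩
  have h1 := hp' z
  simp only [hF] at h1
  have e1 : ‖z‖^2 = ‖x‖^2 + 2 * ⟪x, z - x⟫ + ‖z - x‖^2 := aux_norm_expand x z
  have e2 : ⟪p' - C • x, z - x⟫ = ⟪p', z - x⟫ - C * ⟪x, z - x⟫ := by
    rw [inner_sub_left, real_inner_smul_left]
  rw [e2]
  have e3 : C/2*‖z‖^2 = C/2*‖x‖^2 + C*⟪x, z - x⟫ + C/2*‖z - x‖^2 := by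
    rw [e1]; ring
  linarith [h1, e3]

lemma aux_quad_super [CompleteSpace E] {f : E → ℝ} {C : ℝ} (hc : Continuous f)
    (h : ∀ x h : E, f (x + h) + f (x - h) - 2 * f x ≤ C * ‖h‖ ^ 2) (x : E) :
    ∃ p : E, ∀ z, f z ≤ f x + ⟪p, z - x⟫ + C / 2 * ‖z - x‖ ^ 2 := by
  have h' : ∀ x h : E, -(C * ‖h‖ ^ 2) ≤ (-f) (x + h) + (-f) (x - h) - 2 * (-f) x := by
    intro y h'
    have := h y h'
    simp only [Pi.neg_apply]
    linarith
  obtain ⟨p, hp⟩ := aux_quad_sub (hc.neg) h' x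
  refine ⟨-p, fun z => ?_⟩
  have h1 := hp z
  simp only [Pi.neg_apply] at h1
  rw [inner_neg_left]
  linarith

lemma aux_gradient_of_quad_bound [CompleteSpace E] {f : E → ℝ} {p x : E} {C : ℝ}
    (h : ∀ h : E, |f (x + h) - f x - ⟪p, h⟫| ≤ C / 2 * ‖h‖ ^ 2) :
    HasGradientAt f p x := by
  rw [hasGradientAt_iff_hasFDerivAt, hasFDerivAt_iff_isLittleO_nhds_zero]
  have hb : (fun h : E => f (x + h) - f x - (InnerProductSpace.toDual ℝ E p) h)
      =O[nhds 0] (fun h : E => ‖h‖ ^ 2) := by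
    rw [Asymptotics.isBigO_iff]
    refine ⟨C / 2, Eventually.of_forall fun h' => ?_⟩
    have := h h'
    rw [InnerProductSpace.toDual_apply_apply]
    simpa [Real.norm_eq_abs, abs_of_nonneg (sq_nonneg ‖h'‖)] using this
  have hl : (fun h : E => ‖h‖ ^ 2) =o[nhds 0] (fun h : E => h) := by
    rw [Asymptotics.isLittleO_iff]
    intro c hc
    filter_upwards [Metric.ball_mem_nhds (0 : E) hc] with h' hh'
    rw [mem_ball_zero_iff] at hh'
    rw [Real.norm_eq_abs, abs_of_nonneg (sq_nonneg _)]
    nlinarith [norm_nonneg h']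
  exact hb.trans_isLittleO hl

lemma aux_key [CompleteSpace E] (um up : E → ℝ) (humc : Continuous um) (hupc : Continuous up)
    (C : ℝ) (hC : 0 ≤ C)
    (hsc : ∀ x h : E, um (x + h) + um (x - h) - 2 * um x ≤ C * ‖h‖ ^ 2)
    (hsv : ∀ x h : E, -(C * ‖h‖ ^ 2) ≤ up (x + h) + up (x - h) - 2 * up x)
    (hle : ∀ x : E, up x ≤ um x) (x : E) (heq : um x = up x) :
    ∃ p : E, (∀ z, um z ≤ um x + ⟪p, z - x⟫ + C / 2 * ‖z - x‖ ^ 2) ∧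
      (∀ z, up x + ⟪p, z - x⟫ - C / 2 * ‖z - x‖ ^ 2 ≤ up z) := by
  obtain ⟨p, hp⟩ := aux_quad_super humc hsc x
  obtain ⟨q, hq⟩ := aux_quad_sub hupc hsv x
  have hqp : ∀ h : E, ⟪q - p, h⟫ ≤ C * ‖h‖ ^ 2 := by
    intro h
    have h1 := hp (x + h)
    have h2 := hq (x + h)
    have h3 := hle (x + h)
    simp only [add_sub_cancel_left] at h1 h2
    rw [inner_sub_left]
    linarith
  have hpq : q = p := by
    by_contra hne
    have hn : (0:ℝ) < ‖q - p‖^2 := by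
      have h0 : (0:ℝ) < ‖q - p‖ := norm_pos_iff.2 (sub_ne_zero.2 hne)
      positivity
    have hone : ∀ t : ℝ, 0 < t → (1:ℝ) ≤ C * t := by
      intro t ht
      have := hqp (t • (q - p))
      rw [real_inner_smul_right, norm_smul] at this
      have h2 : ‖t • (q-p)‖ = |t| * ‖q-p‖ := by rw [norm_smul]; rfl
      rw [real_inner_self_eq_norm_sq] at this
      have h3 : t * ‖q - p‖^2 ≤ C * (t^2 * ‖q - p‖^2) := by
        calc t * ‖q - p‖^2 ≤ C * (|t| * ‖q-p‖)^2 := this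
          _ = C * (t^2 * ‖q - p‖^2) := by rw [mul_pow, sq_abs]
      nlinarith [h3, mul_pos ht hn]
    have h4 := hone (1/(C+1)) (by positivity)
    rw [mul_one_div] at h4
    have h5 : C / (C + 1) < 1 := by
      rw [div_lt_one (by linarith)]
      linarith
    linarith
  refine ⟨p, hp, fun z => ?_⟩
  rw [hpq] at hq
  exact hq z

end AuxiliaryLemmas

/-- C^{1,1} regularity on the agreement set: if `u₋` is semiconcave
with linear modulus, `u₊` is semiconvex with linear modulus, and `u₊ ≤ u₋`, then on
`I = {x : u₋(x) = u₊(x)}` both `u₋` and `u₊` are differentiable with a common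
gradient that is Lipschitz on `I`, i.e. they are of class `C^{1,1}` on `I`. -/
theorem stmt_15
    {E : Type*} [NormedAddCommGroup E] [InnerProductSpace ℝ E] [CompleteSpace E]
    (um up : E → ℝ) (humc : Continuous um) (hupc : Continuous up)
    (C : ℝ) (hC : 0 ≤ C)
    -- `u₋` semiconcave with linear modulus
    (hsc : ∀ x h : E, um (x + h) + um (x - h) - 2 * um x ≤ C * ‖h‖ ^ 2)
    -- `u₊` semiconvex with linear modulus
    (hsv : ∀ x h : E, -(C * ‖h‖ ^ 2) ≤ up (x + h) + up (x - h) - 2 * up x)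
    -- `u₊ ≤ u₋`
    (hle : ∀ x : E, up x ≤ um x) :
    ∃ (g : E → E) (K : ℝ≥0),
      (∀ x ∈ {y : E | um y = up y},
        HasGradientAt um (g x) x ∧ HasGradientAt up (g x) x) ∧
      LipschitzOnWith K g {y : E | um y = up y} := by

  classical
  have hkey := aux_key um up humc hupc C hC hsc hsv hle
  choose! P hP1 hP2 using hkey
  refine ⟨P, ⟨3 * C, by positivity⟩, ?_, ?_⟩
  · intro x hx
    have hx' : um x = up x := hx
    have h1 := hP1 x hx'
    have h2 := hP2 x hx'
    constructor
    · apply aux_gradient_of_quad_bound (C := C)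
      intro h
      rw [abs_le]
      have ha := h1 (x + h)
      have hb := h2 (x + h)
      have hcle := hle (x + h)
      simp only [add_sub_cancel_left] at ha hb
      constructor <;> [linarith; linarith]
    · apply aux_gradient_of_quad_bound (C := C)
      intro h
      rw [abs_le]
      have ha := h1 (x + h)
      have hb := h2 (x + h)
      have hcle := hle (x + h)
      simp only [add_sub_cancel_left] at ha hb
      constructor <;> [linarith; linarith]
  · apply lipschitzOnWith_iff_dist_le_mul.2
    intro x hx y hy
    have hx' : um x = up x := hx
    have hy' : um y = up y := hy
    by_cases hxy : x = y
    · simp [hxy]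
    have hd : (0:ℝ) < ‖y - x‖ := norm_pos_iff.2 (sub_ne_zero.2 (Ne.symm hxy))
    set p := P x with hp
    set q := P y with hq
    have main : ∀ w : E, ⟪q - p, w⟫ ≤ C / 2 * (‖y - x‖^2 + ‖w‖^2 + ‖w - (y - x)‖^2) := by
      intro w
      have A := hP2 y hy' (x + w)
      have B := hP1 x hx' (x + w)
      have Cc := hP1 y hy' x
      have D := hle (x + w)
      have e1 : x + w - y = w - (y - x) := by abel
      have e2 : x - y = -(y - x) := by abel
      rw [e1] at A
      rw [e2, norm_neg, inner_neg_right] at Cc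
      simp only [add_sub_cancel_left] at B
      have e3 : ⟪q, w - (y - x)⟫ = ⟪q, w⟫ - ⟪q, y - x⟫ := by
        rw [inner_sub_right]
      have e4 : ⟪q - p, w⟫ = ⟪q, w⟫ - ⟪p, w⟫ := by rw [inner_sub_left]
      rw [e3] at A
      rw [e4]
      linarith
    have hfinal : ‖q - p‖ ≤ 3 * C * ‖y - x‖ := by
      by_cases hpq : q - p = 0
      · rw [hpq, norm_zero]; positivity
      · have hn : (0:ℝ) < ‖q - p‖ := norm_pos_iff.2 hpq
        have hw := main ((‖y - x‖ / ‖q - p‖) • (q - p))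
        rw [real_inner_smul_right, real_inner_self_eq_norm_sq] at hw
        have hnw : ‖(‖y - x‖ / ‖q - p‖) • (q - p)‖ = ‖y - x‖ := by
          rw [norm_smul, Real.norm_eq_abs, abs_of_nonneg (by positivity)]
          field_simp
        rw [hnw] at hw
        have hlhs : ‖y - x‖ / ‖q - p‖ * ‖q - p‖ ^ 2 = ‖y - x‖ * ‖q - p‖ := by
          field_simp
        rw [hlhs] at hw
        have htri : ‖(‖y - x‖ / ‖q - p‖) • (q - p) - (y - x)‖ ≤ 2 * ‖y - x‖ := by
          calc ‖(‖y - x‖ / ‖q - p‖) • (q - p) - (y - x)‖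
              ≤ ‖(‖y - x‖ / ‖q - p‖) • (q - p)‖ + ‖y - x‖ := norm_sub_le _ _
            _ = 2 * ‖y - x‖ := by rw [hnw]; ring
        have htri2 : ‖(‖y - x‖ / ‖q - p‖) • (q - p) - (y - x)‖^2 ≤ 4 * ‖y - x‖^2 := by
          nlinarith [norm_nonneg ((‖y - x‖ / ‖q - p‖) • (q - p) - (y - x)), htri]
        have hfin : ‖y - x‖ * ‖q - p‖ ≤ 3 * C * ‖y - x‖^2 := by nlinarith [hw, htri2, hC]
        nlinarith [hfin, hd]
    have hdist1 : dist (P x) (P y) = ‖q - p‖ := by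
      rw [dist_eq_norm, ← hp, ← hq, norm_sub_rev]
    have hdist2 : dist x y = ‖y - x‖ := by rw [dist_eq_norm, norm_sub_rev]
    rw [hdist1, hdist2]
    calc ‖q - p‖ ≤ 3 * C * ‖y - x‖ := hfinal
      _ = (⟨3 * C, by positivity⟩ : ℝ≥0) * ‖y - x‖ := by norm_num
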